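/- Let I be an ideal on ℕ and μ = (μ_n) a smooth sequence of lower semicontinuous submeasures. If I is an analytic subset of the Cantor space P(ℕ), then J(I,μ) := {A ⊆ ℕ : μ_n(A) →_I 0} is also an analytic subset of P(ℕ). -/

import Mathlib

open Filter Set Topology

/-- A submeasure on ℕ: a monotone, subadditive map `P(ℕ) → [0,∞]` vanishing on `∅`
and finite on singletons. -/
structure Submeasure where
  toFun : Set ℕ → ENNReal
  empty' : toFun ∅ = 0
  mono' : ∀ ⦃A B : Set ℕ⦄, A ⊆ B → toFun A ≤ toFun B
  subadd' : ∀ A B : Set ℕ, toFun (A ∪ B) ≤ toFun A + toFun B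
  singleton_lt_top' : ∀ n : ℕ, toFun {n} < ⊤

instance : CoeFun Submeasure (fun _ => Set ℕ → ENNReal) :=
  ⟨Submeasure.toFun⟩

/-- A sequence of submeasures is smooth if `μ_n({k}) → 0` for every `k` and
`limsup_n μ_n(ℕ) > 0`. -/
def SmoothSubmeasureSeq (μ : ℕ → Submeasure) : Prop :=
  (∀ k : ℕ, Tendsto (fun n => μ n {k}) atTop (nhds 0)) ∧
    0 < Filter.limsup (fun n => μ n Set.univ) atTop

/-- A (possibly improper) ideal on ℕ: contains all finite sets, closed under
subsets and finite unions. -/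
def IsIdeal (I : Set (Set ℕ)) : Prop :=
  (∀ A : Set ℕ, A.Finite → A ∈ I) ∧
    (∀ ⦃A B : Set ℕ⦄, A ⊆ B → B ∈ I → A ∈ I) ∧
    (∀ ⦃A B : Set ℕ⦄, A ∈ I → B ∈ I → A ∪ B ∈ I)

/-- A proper ideal on ℕ. -/
def IsProperIdeal (I : Set (Set ℕ)) : Prop :=
  IsIdeal I ∧ (Set.univ : Set ℕ) ∉ I

/-- `J(I,μ) = {A ⊆ ℕ : μ_n(A) →_I 0}`. -/
def JIdeal (I : Set (Set ℕ)) (μ : ℕ → Submeasure) : Set (Set ℕ) :=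
  {A : Set ℕ | ∀ ε : ℝ, 0 < ε → {n : ℕ | ENNReal.ofReal ε ≤ μ n A} ∈ I}

/-- `(I,μ)`-convergence of a sequence `x` to `l`. -/
def IMuConv (I : Set (Set ℕ)) (μ : ℕ → Submeasure) {X : Type*} [TopologicalSpace X]
    (x : ℕ → X) (l : X) : Prop :=
  ∀ U ∈ nhds l, ∀ ε : ℝ, 0 < ε →
    {n : ℕ | ENNReal.ofReal ε ≤ μ n {k : ℕ | x k ∉ U}} ∈ I

/-- `J`-convergence of a sequence `x` to `l`, for a family `J` of subsets of ℕ. -/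
def IdealConv (J : Set (Set ℕ)) {X : Type*} [TopologicalSpace X]
    (x : ℕ → X) (l : X) : Prop :=
  ∀ U ∈ nhds l, {n : ℕ | x n ∉ U} ∈ J

/-- A submeasure is lower semicontinuous if `φ(A) = lim_n φ(A ∩ [1,n])` for all `A`. -/
def LowerSemicontinuousSubmeasure (φ : Submeasure) : Prop :=
  ∀ A : Set ℕ, Tendsto (fun n : ℕ => φ (A ∩ Set.Icc 1 n)) atTop (nhds (φ A))

/-- Identification of `P(ℕ)` with the Cantor space `{0,1}^ℕ` via characteristic
functions. -/
noncomputable def chi (A : Set ℕ) : ℕ → Bool :=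
  fun n => @decide (n ∈ A) (Classical.propDecidable _)

section Aux
open MeasureTheory

lemma chi_sA (x : ℕ → Bool) : chi {m | x m = true} = x := by
  funext n
  simp [chi]

lemma sA_chi (A : Set ℕ) : {m | chi A m = true} = A := by
  ext m
  simp [chi]

lemma chi_inj : Function.Injective chi := by
  intro A B h
  rw [← sA_chi A, ← sA_chi B, h]

-- measurability of x ↦ φ {m | x m = true} for lsc submeasure φ
lemma meas_g (φ : Submeasure) (hφ : LowerSemicontinuousSubmeasure φ) :
    Measurable (fun x : ℕ → Bool => φ {m | x m = true}) := by
  have key : (fun x : ℕ → Bool => φ {m | x m = true}) =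
      fun x => ⨆ k : ℕ, φ ({m | x m = true} ∩ Set.Icc 1 k) := by
    funext x
    have hmono : Monotone (fun k : ℕ => φ ({m | x m = true} ∩ Set.Icc 1 k)) := by
      intro a b hab
      exact φ.mono' (Set.inter_subset_inter_right _ (Set.Icc_subset_Icc_right hab))
    exact tendsto_nhds_unique (hφ _) (tendsto_atTop_iSup hmono)
  rw [key]
  refine Measurable.iSup fun k => ?_
  -- f_k depends only on coordinates in Icc 1 k, hence continuous
  have : (fun x : ℕ → Bool => φ ({m | x m = true} ∩ Set.Icc 1 k)) =
      (fun u : ↥(Finset.Icc 1 k) → Bool =>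
        φ {m : ℕ | if hm : m ∈ Finset.Icc 1 k then u ⟨m, hm⟩ = true else False}) ∘
      (fun x (i : ↥(Finset.Icc 1 k)) => x (i : ℕ)) := by
    funext x
    simp only [Function.comp]
    congr 1
    ext m
    by_cases hm : m ∈ Finset.Icc 1 k
    · simp [hm, Set.mem_Icc, Finset.mem_Icc.mp hm]
    · have hm' : m ∉ Set.Icc 1 k := by
        simpa [Finset.mem_Icc, Set.mem_Icc] using hm
      simp only [Set.mem_inter_iff, Set.mem_setOf_eq, hm, dif_neg, not_false_iff,
        iff_false, Set.mem_Icc]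
      simp only [Set.mem_Icc] at hm'
      tauto
  rw [this]
  have hh : Continuous (fun u : ↥(Finset.Icc 1 k) → Bool =>
      φ {m : ℕ | if hm : m ∈ Finset.Icc 1 k then u ⟨m, hm⟩ = true else False}) :=
    continuous_of_discreteTopology
  have hr : Continuous (fun (x : ℕ → Bool) (i : ↥(Finset.Icc 1 k)) => x (i : ℕ)) :=
    continuous_pi fun i => continuous_apply (i : ℕ)
  exact (hh.comp hr).measurable

lemma analytic_preimage_measurable {X Y : Type*} [tX : TopologicalSpace X] [PolishSpace X]
    [MeasurableSpace X] [BorelSpace X] [TopologicalSpace Y] [T2Space Y] [MeasurableSpace Y]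
    [OpensMeasurableSpace Y] [SecondCountableTopology Y] {s : Set Y} (hs : AnalyticSet s)
    {f : X → Y} (hf : Measurable f) : AnalyticSet (f ⁻¹' s) := by
  obtain ⟨t', hle, hcont, hpol⟩ := hf.exists_continuous
  have h1 : @AnalyticSet X t' (f ⁻¹' s) := @AnalyticSet.preimage X Y t' _ hpol _ s hs f hcont
  have h2 := @AnalyticSet.image_of_continuous X t' X tX _ h1 id (continuous_id_of_le hle)
  simpa using h2

theorem stmt_5' (I : Set (Set ℕ)) (hI : (∀ ⦃A B : Set ℕ⦄, A ⊆ B → B ∈ I → A ∈ I))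
    (μ : ℕ → Submeasure)
    (hlsc : ∀ n : ℕ, LowerSemicontinuousSubmeasure (μ n))
    (hAnalytic : MeasureTheory.AnalyticSet (chi '' I)) :
    MeasureTheory.AnalyticSet (chi ''
      {A : Set ℕ | ∀ ε : ℝ, 0 < ε → {n : ℕ | ENNReal.ofReal ε ≤ μ n A} ∈ I}) := by
  classical
  set J := {A : Set ℕ | ∀ ε : ℝ, 0 < ε → {n : ℕ | ENNReal.ofReal ε ≤ μ n A} ∈ I} with hJ
  set F : {q : ℚ // 0 < q} → (ℕ → Bool) → (ℕ → Bool) := fun q x n =>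
    decide (ENNReal.ofReal (q : ℝ) ≤ μ n {m | x m = true}) with hF
  have hFchi : ∀ q A, F q (chi A) = chi {n | ENNReal.ofReal ((q : {q : ℚ // 0 < q}) : ℝ) ≤ μ n A} := by
    intro q A
    funext n
    simp only [hF, sA_chi, chi]
    exact decide_eq_decide.mpr (by simp)
  have key : chi '' J = ⋂ q : {q : ℚ // 0 < q}, F q ⁻¹' (chi '' I) := by
    ext x
    constructor
    · rintro ⟨A, hA, rfl⟩
      refine Set.mem_iInter.mpr fun q => ?_
      rw [Set.mem_preimage, hFchi]
      exact ⟨_, hA (q : ℚ) (by exact_mod_cast q.2), rfl⟩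
    · intro hx
      refine ⟨{m | x m = true}, ?_, chi_sA x⟩
      intro ε hε
      obtain ⟨q, hq0, hqε⟩ := exists_rat_btwn hε
      have hq0' : 0 < q := by exact_mod_cast hq0
      have := Set.mem_iInter.mp hx ⟨q, hq0'⟩
      rw [Set.mem_preimage] at this
      obtain ⟨B, hB, hBx⟩ := this
      have hBeq : B = {n | ENNReal.ofReal (q : ℝ) ≤ μ n {m | x m = true}} := by
        apply chi_inj
        rw [hBx, ← chi_sA x, hFchi, chi_sA]
      subst hBeq
      refine hI (fun n hn => ?_) hB
      exact le_trans (ENNReal.ofReal_le_ofReal hqε.le) hn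
  rw [key]
  refine AnalyticSet.iInter fun q => ?_
  haveI : PolishSpace (ℕ → Bool) :=
    @instPolishSpaceOfSeparableSpaceOfIsCompletelyMetrizableSpace _ _ inferInstance inferInstance
  refine analytic_preimage_measurable hAnalytic ?_
  rw [measurable_pi_iff]
  intro n
  have hg := meas_g (μ n) (hlsc n)
  apply measurable_to_countable'
  intro b
  cases b
  · have : (fun x : ℕ → Bool => F q x n) ⁻¹' {false} =
        (fun x : ℕ → Bool => μ n {m | x m = true}) ⁻¹' (Set.Iio (ENNReal.ofReal (q : ℝ))) := by
      ext x; simp [hF, not_le]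
    rw [this]; exact hg measurableSet_Iio
  · have : (fun x : ℕ → Bool => F q x n) ⁻¹' {true} =
        (fun x : ℕ → Bool => μ n {m | x m = true}) ⁻¹' (Set.Ici (ENNReal.ofReal (q : ℝ))) := by
      ext x; simp [hF]
    rw [this]; exact hg measurableSet_Ici

end Aux

/-- if `I` is analytic then so is `J(I,μ)`, for any smooth sequence of
lower semicontinuous submeasures `μ`. -/
theorem stmt_5 (I : Set (Set ℕ)) (hI : IsProperIdeal I)
    (μ : ℕ → Submeasure) (hμ : SmoothSubmeasureSeq μ)
    (hlsc : ∀ n : ℕ, LowerSemicontinuousSubmeasure (μ n))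
    (hAnalytic : MeasureTheory.AnalyticSet (chi '' I)) :
    MeasureTheory.AnalyticSet (chi '' JIdeal I μ) :=
  stmt_5' I hI.1.2.1 μ hlsc hAnalytic
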